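/- The map j:ℕ→ℕ defined by j(n)=⌊φn⌋−1 if n∈R_{1,0}, j(n)=⌊(φ−1)n⌋+1 if n∈R_{1,1}, and j(n)=⌊φn⌋+1 if n∈R_{2,0}, is a well-defined bijection of ℕ onto itself, and its inverse is the map defined piecewise by j⁻¹(n)=⌊φn⌋ if n∈R_{2,0}∪R_{1,1}, j⁻¹(n)=⌊(φ−1)n⌋+1 if n∈R_{2,1}, and j⁻¹(n)=⌊(φ−1)n⌋ if n∈R_{3,0}. -/

import Mathlib

/-- The golden ratio φ = (1 + √5)/2. -/
noncomputable def phi : ℝ := (1 + Real.sqrt 5) / 2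

/-- The lower Wythoff sequence a(n) = ⌊nφ⌋. -/
noncomputable def wa (n : ℕ) : ℕ := ⌊(n : ℝ) * phi⌋₊


lemma phi_eq : phi = Real.goldenRatio := rfl
lemma phi_irr : Irrational phi := Real.goldenRatio_irrational
lemma phi_gt : 1.6 < phi := by
  have h : (2.23 : ℝ) < Real.sqrt 5 := by
    nlinarith [Real.sq_sqrt (by norm_num : (5:ℝ) ≥ 0), Real.sqrt_nonneg 5]
  unfold phi; linarith
lemma phi_lt : phi < 1.62 := by
  have h : Real.sqrt 5 < 2.24 := by
    nlinarith [Real.sq_sqrt (by norm_num : (5:ℝ) ≥ 0), Real.sqrt_nonneg 5]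
  unfold phi; linarith
lemma phi_sq : phi ^ 2 = phi + 1 := Real.goldenRatio_sq

/-- fractional part -/
noncomputable def tf (n : ℕ) : ℝ := (n : ℝ) * phi - wa n

lemma tf_pos {n : ℕ} (hn : 0 < n) : 0 < tf n := by
  have hne : (n : ℝ) ≠ 0 := by exact_mod_cast hn.ne'
  have hirr : Irrational ((n : ℝ) * phi) := by
    have := phi_irr.natCast_mul (m := n) hn.ne'
    simpa [mul_comm] using this
  have h0 : (0:ℝ) ≤ (n : ℝ) * phi := by
    have := phi_gt
    have : (0:ℝ) ≤ (n:ℝ) := Nat.cast_nonneg n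
    nlinarith [phi_gt]
  have h := Nat.floor_le h0
  rcases lt_or_eq_of_le h with h' | h'
  · unfold tf wa; linarith
  · exact absurd h'.symm (hirr.ne_nat _)
lemma tf_lt_one (n : ℕ) : tf n < 1 := by
  have := Nat.lt_floor_add_one ((n : ℝ) * phi)
  unfold tf wa; push_cast at this ⊢; linarith
lemma wa_eq (n : ℕ) : (wa n : ℝ) = (n : ℝ) * phi - tf n := by unfold tf; ring

lemma phi_pos : 0 < phi := by linarith [phi_gt]

lemma mul_phi_nonneg (n : ℕ) : (0:ℝ) ≤ (n:ℝ) * phi := by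
  have : (0:ℝ) ≤ (n:ℝ) := Nat.cast_nonneg n
  nlinarith [phi_gt]

lemma nat_floor_eq {m : ℕ} {x : ℝ} (h1 : (m:ℝ) ≤ x) (h2 : x < m+1) : ⌊x⌋₊ = m := by
  rw [Nat.floor_eq_iff (le_trans (Nat.cast_nonneg m) h1)]; exact ⟨h1, h2⟩

lemma wa_pos {n : ℕ} (hn : 0 < n) : 1 ≤ wa n := by
  have h1 : (1:ℝ) ≤ (n:ℝ) * phi := by
    have : (1:ℝ) ≤ (n:ℝ) := by exact_mod_cast hn
    nlinarith [phi_gt]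
  exact Nat.le_floor (by exact_mod_cast h1)

lemma wa_strictMono : StrictMono wa := by
  apply strictMono_nat_of_lt_succ
  intro n
  have h1 : (wa n : ℝ) ≤ (n:ℝ)*phi := Nat.floor_le (mul_phi_nonneg n)
  have h : ((wa n + 1 : ℕ) : ℝ) ≤ ((n+1:ℕ):ℝ) * phi := by
    push_cast; nlinarith [phi_gt]
  have h2 := Nat.le_floor h
  change wa n < wa (n+1); unfold wa at h2 ⊢; omega

/-- a(a(n)) + 1 = a(n) + n -/
lemma wa_wa {n : ℕ} (hn : 0 < n) : wa (wa n) + 1 = wa n + n := by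
  have ht0 := tf_pos hn; have ht1 := tf_lt_one n
  have key : ((wa n : ℕ) : ℝ) * phi = ((wa n + n - 1 : ℕ) : ℝ) + (1 + tf n * (1 - phi)) := by
    have h1 : 1 ≤ wa n + n := by have := wa_pos hn; omega
    push_cast [Nat.cast_sub h1]
    rw [wa_eq n]; nlinarith [phi_sq]
  have : wa (wa n) = wa n + n - 1 := by
    apply nat_floor_eq <;> rw [key] <;> nlinarith [phi_gt, phi_lt]
  have := wa_pos hn; omega

/-- a(b(n)) = 2a(n) + n -/
lemma wa_wb {n : ℕ} (hn : 0 < n) : wa (wa n + n) = 2 * wa n + n := by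
  have ht0 := tf_pos hn; have ht1 := tf_lt_one n
  have key : ((wa n + n : ℕ) : ℝ) * phi = ((2 * wa n + n : ℕ) : ℝ) + tf n * (2 - phi) := by
    unfold tf; push_cast; linear_combination (n:ℝ) * phi_sq
  apply nat_floor_eq <;> rw [key] <;> nlinarith [phi_gt, phi_lt]

/-- fract(b(n)·φ) = t(n)·(2−φ) -/
lemma tf_wb {n : ℕ} (hn : 0 < n) : tf (wa n + n) = tf n * (2 - phi) := by
  have ht0 := tf_pos hn; have ht1 := tf_lt_one n
  unfold tf; rw [wa_wb hn]; push_cast; linear_combination (n:ℝ) * phi_sq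

/-- ⌊(φ−1)·b(n)⌋ = a(n) -/
lemma inv_wb {n : ℕ} (hn : 0 < n) : ⌊(phi - 1) * ((wa n + n : ℕ) : ℝ)⌋₊ = wa n := by
  have ht0 := tf_pos hn; have ht1 := tf_lt_one n
  have key : (phi - 1) * ((wa n + n : ℕ) : ℝ) = (wa n : ℝ) + tf n * (2 - phi) := by
    unfold tf; push_cast; linear_combination (n:ℝ) * phi_sq
  apply nat_floor_eq <;> rw [key] <;> nlinarith [phi_gt, phi_lt]

/-- ⌊(φ−1)·(b(n)−1)⌋ + 1 = a(n) -/
lemma inv_wb' {n : ℕ} (hn : 0 < n) : ⌊(phi - 1) * ((wa n + n - 1 : ℕ) : ℝ)⌋₊ + 1 = wa n := by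
  have ht0 := tf_pos hn; have ht1 := tf_lt_one n
  have ha := wa_pos hn
  have hb : 1 ≤ wa n + n := by omega
  have key : (phi - 1) * ((wa n + n - 1 : ℕ) : ℝ) = ((wa n - 1 : ℕ) : ℝ) + (tf n * (2 - phi) - (phi - 1) + 1) := by
    unfold tf; push_cast [Nat.cast_sub hb, Nat.cast_sub ha]
    linear_combination (n:ℝ) * phi_sq
  have : ⌊(phi - 1) * ((wa n + n - 1 : ℕ) : ℝ)⌋₊ = wa n - 1 := by
    apply nat_floor_eq <;> rw [key] <;> nlinarith [phi_gt, phi_lt]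
  omega

/-- ⌊(φ−1)·(a(n)−1)⌋ + 1 = n, when fract(nφ) < φ−1 -/
lemma inv_wa' {n : ℕ} (hn : 0 < n) (hs : tf n < phi - 1) :
    ⌊(phi - 1) * ((wa n - 1 : ℕ) : ℝ)⌋₊ + 1 = n := by
  have ht0 := tf_pos hn; have ha := wa_pos hn
  have key : (phi - 1) * ((wa n - 1 : ℕ) : ℝ) = ((n - 1 : ℕ) : ℝ) + (1 - (tf n + 1) * (phi - 1)) := by
    unfold tf; push_cast [Nat.cast_sub ha, Nat.cast_sub hn]
    linear_combination (n:ℝ) * phi_sq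
  have hlt : (tf n + 1) * (phi - 1) < 1 := by
    have h1 : (tf n + 1) * (phi - 1) < phi * (phi - 1) :=
      mul_lt_mul_of_pos_right (by linarith) (by linarith [phi_gt])
    nlinarith [phi_sq]
  have : ⌊(phi - 1) * ((wa n - 1 : ℕ) : ℝ)⌋₊ = n - 1 := by
    apply nat_floor_eq <;> rw [key] <;> nlinarith [phi_gt, phi_lt]
  omega

/-- a(b(n)−1) + 2 = 2a(n) + n -/
lemma wa_wb' {n : ℕ} (hn : 0 < n) : wa (wa n + n - 1) + 2 = 2 * wa n + n := by
  have ht0 := tf_pos hn; have ht1 := tf_lt_one n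
  have ha := wa_pos hn
  have hb : 1 ≤ wa n + n := by omega
  have h2 : 2 ≤ 2 * wa n + n := by omega
  have key : ((wa n + n - 1 : ℕ) : ℝ) * phi = ((2 * wa n + n - 2 : ℕ) : ℝ) + (2 - phi + tf n * (2 - phi)) := by
    unfold tf; push_cast [Nat.cast_sub hb, Nat.cast_sub h2]
    linear_combination (n:ℝ) * phi_sq
  have : wa (wa n + n - 1) = 2 * wa n + n - 2 := by
    apply nat_floor_eq <;> rw [key] <;> nlinarith [phi_gt, phi_lt]
  omega

def inA (n : ℕ) : Prop := ∃ m : ℕ, 0 < m ∧ wa m = n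
def inB (n : ℕ) : Prop := ∃ m : ℕ, 0 < m ∧ wa m + m = n

lemma phi_conj : Real.HolderConjugate phi (phi^2) := by
  rw [Real.holderConjugate_iff]
  constructor
  · linarith [phi_gt]
  · have hp := phi_pos
    field_simp
    nlinarith [phi_sq]

lemma wa_int (m : ℕ) : ((wa m : ℤ) : ℤ) = ⌊(m:ℝ) * phi⌋ :=
  Int.natCast_floor_eq_floor (mul_phi_nonneg m)

lemma wb_int (m : ℕ) : ((wa m + m : ℕ) : ℤ) = ⌊(m:ℝ) * phi ^ 2⌋ := by
  have h : (m:ℝ) * phi ^ 2 = (m:ℝ) * phi + (m : ℕ) := by rw [phi_sq]; ring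
  rw [h, Int.floor_add_natCast]
  push_cast [← wa_int m]
  ring

lemma beatty_partition {n : ℕ} (hn : 0 < n) :
    (inA n ∧ ¬ inB n) ∨ (inB n ∧ ¬ inA n) := by
  have key := phi_irr.beattySeq_symmDiff_beattySeq_pos phi_conj
  have hmem : (n : ℤ) ∈ {n : ℤ | 0 < n} := Set.mem_setOf.mpr (by exact_mod_cast hn)
  rw [← key, Set.mem_symmDiff] at hmem
  have hA : ((n:ℤ) ∈ {x : ℤ | ∃ k > 0, beattySeq phi k = x}) ↔ inA n := by
    constructor
    · rintro ⟨k, hk, he⟩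
      refine ⟨k.toNat, by omega, ?_⟩
      have hk' : ((k.toNat : ℕ) : ℤ) = k := Int.toNat_of_nonneg hk.le
      have hkr : ((k.toNat : ℕ) : ℝ) = (k : ℝ) := by exact_mod_cast hk'
      have : (wa k.toNat : ℤ) = (n : ℤ) := by
        rw [wa_int, hkr]; unfold beattySeq at he; exact he
      exact_mod_cast this
    · rintro ⟨m, hm, he⟩
      refine ⟨(m : ℤ), by exact_mod_cast hm, ?_⟩
      have : beattySeq phi (m : ℤ) = ⌊(m:ℝ) * phi⌋ := by unfold beattySeq; norm_num
      rw [this, ← wa_int, he]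
  have hB : ((n:ℤ) ∈ {x : ℤ | ∃ k > 0, beattySeq (phi^2) k = x}) ↔ inB n := by
    constructor
    · rintro ⟨k, hk, he⟩
      refine ⟨k.toNat, by omega, ?_⟩
      have hk' : ((k.toNat : ℕ) : ℤ) = k := Int.toNat_of_nonneg hk.le
      have hkr : ((k.toNat : ℕ) : ℝ) = (k : ℝ) := by exact_mod_cast hk'
      have : ((wa k.toNat + k.toNat : ℕ) : ℤ) = (n : ℤ) := by
        rw [wb_int, hkr]; unfold beattySeq at he; exact he
      exact_mod_cast this
    · rintro ⟨m, hm, he⟩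
      refine ⟨(m : ℤ), by exact_mod_cast hm, ?_⟩
      have : beattySeq (phi^2) (m : ℤ) = ⌊(m:ℝ) * phi^2⌋ := by unfold beattySeq; norm_num
      rw [this, ← wb_int, he]
  rcases hmem with ⟨h1, h2⟩ | ⟨h1, h2⟩
  · exact Or.inl ⟨hA.mp h1, fun hb => h2 (hB.mpr hb)⟩
  · exact Or.inr ⟨hB.mp h1, fun ha => h2 (hA.mpr ha)⟩

lemma inA_pos {n : ℕ} (h : inA n) : 0 < n := by
  obtain ⟨m, hm, he⟩ := h; have := wa_pos hm; omega

lemma inB_pos {n : ℕ} (h : inB n) : 0 < n := by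
  obtain ⟨m, hm, he⟩ := h; have := wa_pos hm; omega

lemma AorB {n : ℕ} (hn : 0 < n) : inA n ∨ inB n := by
  rcases beatty_partition hn with ⟨h, _⟩ | ⟨h, _⟩
  exacts [Or.inl h, Or.inr h]

lemma notAB {n : ℕ} (hA : inA n) (hB : inB n) : False := by
  rcases beatty_partition (inA_pos hA) with ⟨_, h⟩ | ⟨_, h⟩
  exacts [h hB, h hA]

lemma wa_inj {m k : ℕ} (h : wa m = wa k) : m = k := wa_strictMono.injective h

lemma wb_inj {m k : ℕ} (h : wa m + m = wa k + k) : m = k := by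
  rcases lt_trichotomy m k with hlt | he | hlt
  · have := wa_strictMono hlt; omega
  · exact he
  · have := wa_strictMono hlt; omega

/-- f_{i,j}(n) = F(i+1)·a(n) + F(i)·n − j. -/
noncomputable def fij (i : ℕ) (j : ℤ) (n : ℕ) : ℤ :=
  (Nat.fib (i + 1) : ℤ) * wa n + (Nat.fib i : ℤ) * n - j

/-- R_{i,j} = { f_{i,j}(n) : n ∈ ℕ, n ≥ 1 }. -/
def R (i : ℕ) (j : ℤ) : Set ℤ := {m | ∃ n : ℕ, 0 < n ∧ fij i j n = m}

open scoped Classical in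
/-- j(n) = ⌊φn⌋−1 if n ∈ R_{1,0}, ⌊(φ−1)n⌋+1 if n ∈ R_{1,1}, ⌊φn⌋+1 if n ∈ R_{2,0}. -/
noncomputable def jmap (n : ℕ) : ℕ :=
  if (n : ℤ) ∈ R 1 0 then wa n - 1
  else if (n : ℤ) ∈ R 1 1 then ⌊(phi - 1) * (n : ℝ)⌋₊ + 1
  else wa n + 1

open scoped Classical in
/-- The claimed inverse: ⌊φn⌋ if n ∈ R_{2,0} ∪ R_{1,1}, ⌊(φ−1)n⌋+1 if n ∈ R_{2,1},
⌊(φ−1)n⌋ if n ∈ R_{3,0}. -/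
noncomputable def jinv (n : ℕ) : ℕ :=
  if (n : ℤ) ∈ R 2 0 ∪ R 1 1 then wa n
  else if (n : ℤ) ∈ R 2 1 then ⌊(phi - 1) * (n : ℝ)⌋₊ + 1
  else ⌊(phi - 1) * (n : ℝ)⌋₊


lemma memR10 (x : ℕ) : ((x:ℤ) ∈ R 1 0) ↔ inB x := by
  unfold R fij inB
  constructor
  · rintro ⟨m, hm, he⟩
    refine ⟨m, hm, ?_⟩
    simp [Nat.fib] at he; push_cast at he; omega
  · rintro ⟨m, hm, he⟩
    refine ⟨m, hm, ?_⟩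
    simp [Nat.fib]; push_cast; omega

lemma memR11 (x : ℕ) : ((x:ℤ) ∈ R 1 1) ↔ inB (x + 1) := by
  unfold R fij inB
  constructor
  · rintro ⟨m, hm, he⟩
    refine ⟨m, hm, ?_⟩
    simp [Nat.fib] at he; push_cast at he; omega
  · rintro ⟨m, hm, he⟩
    refine ⟨m, hm, ?_⟩
    simp [Nat.fib]; push_cast; omega

lemma memR20 (x : ℕ) : ((x:ℤ) ∈ R 2 0) ↔ ∃ m, 0 < m ∧ 2 * wa m + m = x := by
  unfold R fij
  constructor
  · rintro ⟨m, hm, he⟩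
    refine ⟨m, hm, ?_⟩
    simp [Nat.fib] at he; push_cast at he; omega
  · rintro ⟨m, hm, he⟩
    refine ⟨m, hm, ?_⟩
    simp [Nat.fib]; push_cast; omega

lemma memR21 (x : ℕ) : ((x:ℤ) ∈ R 2 1) ↔ ∃ m, 0 < m ∧ 2 * wa m + m = x + 1 := by
  unfold R fij
  constructor
  · rintro ⟨m, hm, he⟩
    refine ⟨m, hm, ?_⟩
    simp [Nat.fib] at he; push_cast at he; omega
  · rintro ⟨m, hm, he⟩
    refine ⟨m, hm, ?_⟩
    simp [Nat.fib]; push_cast; omega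

lemma memR30 (x : ℕ) : ((x:ℤ) ∈ R 3 0) ↔ ∃ m, 0 < m ∧ 3 * wa m + 2 * m = x := by
  unfold R fij
  constructor
  · rintro ⟨m, hm, he⟩
    refine ⟨m, hm, ?_⟩
    simp [Nat.fib] at he; push_cast at he; omega
  · rintro ⟨m, hm, he⟩
    refine ⟨m, hm, ?_⟩
    simp [Nat.fib]; push_cast; omega

lemma cases3 {n : ℕ} (hn : 0 < n) :
    inB n ∨ inB (n + 1) ∨ (∃ m, 0 < m ∧ 2 * wa m + m = n) := by
  rcases AorB hn with ⟨k, hk, he⟩ | h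
  · rcases AorB hk with ⟨m, hm, he2⟩ | ⟨m, hm, he2⟩
    · right; left
      have := wa_wa hm
      exact ⟨m, hm, by subst he2; omega⟩
    · right; right
      refine ⟨m, hm, ?_⟩
      have := wa_wb hm
      rw [he2] at this; omega
  · exact Or.inl h

lemma not_B_B1 {n : ℕ} (h1 : inB n) (h2 : inB (n + 1)) : False := by
  obtain ⟨m, hm, he⟩ := h2
  have hww := wa_wa hm
  exact notAB ⟨wa m, wa_pos hm, by omega⟩ h1

lemma not_B_AB {n : ℕ} (h1 : inB n) (h2 : ∃ m, 0 < m ∧ 2 * wa m + m = n) : False := by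
  obtain ⟨m, hm, he⟩ := h2
  have hww := wa_wb hm
  exact notAB ⟨wa m + m, by have := wa_pos hm; omega, by omega⟩ h1

lemma not_B1_AB {n : ℕ} (h1 : inB (n + 1)) (h2 : ∃ m, 0 < m ∧ 2 * wa m + m = n) : False := by
  obtain ⟨m', hm', he'⟩ := h1
  obtain ⟨m, hm, he⟩ := h2
  have h3 := wa_wa hm'
  have h4 := wa_wb hm
  have : wa (wa m') = wa (wa m + m) := by omega
  have h5 := wa_inj this
  exact notAB ⟨m', hm', h5⟩ ⟨m, hm, rfl⟩

lemma casesB {n : ℕ} (h : inB n) :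
    (∃ m, 0 < m ∧ 2 * wa m + m = n + 1) ∨ (∃ m, 0 < m ∧ 3 * wa m + 2 * m = n) := by
  obtain ⟨k, hk, he⟩ := h
  rcases AorB hk with ⟨m, hm, he2⟩ | ⟨m, hm, he2⟩
  · left
    have := wa_wa hm
    exact ⟨m, hm, by subst he2; omega⟩
  · right
    refine ⟨m, hm, ?_⟩
    have := wa_wb hm
    rw [he2] at this; omega

lemma not_BA_BB {n : ℕ} (h1 : ∃ m, 0 < m ∧ 2 * wa m + m = n + 1)
    (h2 : ∃ m, 0 < m ∧ 3 * wa m + 2 * m = n) : False := by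
  obtain ⟨m, hm, he⟩ := h1
  obtain ⟨m', hm', he'⟩ := h2
  have h3 := wa_wa hm
  have h4 := wa_wb hm'
  have hb : inB n := ⟨wa m, wa_pos hm, by omega⟩
  have hb' : inB n := ⟨wa m' + m', by have := wa_pos hm'; omega, by omega⟩
  obtain ⟨j, hj, hje⟩ := hb
  -- wa m + wa m = ... use wb_inj directly
  have : wa (wa m) + wa m = wa (wa m' + m') + (wa m' + m') := by omega
  have h5 := wb_inj this
  exact notAB ⟨m, hm, h5⟩ ⟨m', hm', rfl⟩

-- jmap values
lemma jmap_B {m : ℕ} (hm : 0 < m) : jmap (wa m + m) = 2 * wa m + m - 1 := by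
  have h10 : ((wa m + m : ℕ) : ℤ) ∈ R 1 0 := (memR10 _).mpr ⟨m, hm, rfl⟩
  unfold jmap
  rw [if_pos h10, wa_wb hm]

lemma jmap_B1 {m : ℕ} (hm : 0 < m) : jmap (wa m + m - 1) = wa m := by
  have ha := wa_pos hm
  have hb1 : inB (wa m + m - 1 + 1) := ⟨m, hm, by omega⟩
  have h10 : ¬ ((wa m + m - 1 : ℕ) : ℤ) ∈ R 1 0 := fun h => not_B_B1 ((memR10 _).mp h) hb1
  have h11 : ((wa m + m - 1 : ℕ) : ℤ) ∈ R 1 1 := (memR11 _).mpr hb1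
  unfold jmap
  rw [if_neg h10, if_pos h11, inv_wb' hm]

lemma jmap_AB {m : ℕ} (hm : 0 < m) : jmap (2 * wa m + m) = 3 * wa m + 2 * m := by
  have hab : ∃ k, 0 < k ∧ 2 * wa k + k = 2 * wa m + m := ⟨m, hm, rfl⟩
  have h10 : ¬ ((2 * wa m + m : ℕ) : ℤ) ∈ R 1 0 := fun h => not_B_AB ((memR10 _).mp h) hab
  have h11 : ¬ ((2 * wa m + m : ℕ) : ℤ) ∈ R 1 1 := fun h => not_B1_AB ((memR11 _).mp h) hab
  unfold jmap
  rw [if_neg h10, if_neg h11]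
  have hb : 0 < wa m + m := by have := wa_pos hm; omega
  have h1 := wa_wb hm
  have h2 := wa_wa hb
  rw [← h1]
  omega

-- jinv values
lemma jinv_A {k : ℕ} (hk : 0 < k) : jinv (wa k) + 1 = wa k + k := by
  have hmem : ((wa k : ℕ) : ℤ) ∈ R 2 0 ∪ R 1 1 := by
    rcases AorB hk with ⟨m, hm, he2⟩ | ⟨m, hm, he2⟩
    · right
      have := wa_wa hm
      exact (memR11 _).mpr ⟨m, hm, by subst he2; omega⟩
    · left
      have := wa_wb hm
      exact (memR20 _).mpr ⟨m, hm, by subst he2; omega⟩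
  unfold jinv
  rw [if_pos hmem, wa_wa hk]

lemma jinv_BA {m : ℕ} (hm : 0 < m) : jinv (2 * wa m + m - 1) = wa m + m := by
  have ha := wa_pos hm
  have hb : 0 < wa m + m := by omega
  have hwb := wa_wb hm
  have hn : inB (2 * wa m + m - 1) := ⟨wa m, wa_pos hm, by have := wa_wa hm; omega⟩
  have h20 : ¬ ((2 * wa m + m - 1 : ℕ) : ℤ) ∈ R 2 0 := fun h => by
    obtain ⟨m', hm', he'⟩ := (memR20 _).mp h
    have := wa_wb hm'
    exact notAB ⟨wa m' + m', by have := wa_pos hm'; omega, by omega⟩ hn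
  have h11 : ¬ ((2 * wa m + m - 1 : ℕ) : ℤ) ∈ R 1 1 := fun h =>
    not_B_B1 hn ((memR11 _).mp h)
  have h21 : ((2 * wa m + m - 1 : ℕ) : ℤ) ∈ R 2 1 := (memR21 _).mpr ⟨m, hm, by omega⟩
  have hts : tf (wa m + m) < phi - 1 := by
    have := tf_wb hm
    have h1 := tf_pos hm; have h2 := tf_lt_one m
    nlinarith [phi_gt, phi_lt]
  have key := inv_wa' hb hts
  unfold jinv
  rw [if_neg (by rintro (h | h); exacts [h20 h, h11 h]), if_pos h21]
  rw [show 2 * wa m + m - 1 = wa (wa m + m) - 1 by omega]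
  exact key

lemma jinv_BB {m : ℕ} (hm : 0 < m) : jinv (3 * wa m + 2 * m) = 2 * wa m + m := by
  have ha := wa_pos hm
  have hb : 0 < wa m + m := by omega
  have hwb := wa_wb hm
  have hn : inB (3 * wa m + 2 * m) := ⟨wa m + m, hb, by omega⟩
  have hbb : ∃ k, 0 < k ∧ 3 * wa k + 2 * k = 3 * wa m + 2 * m := ⟨m, hm, rfl⟩
  have h20 : ¬ ((3 * wa m + 2 * m : ℕ) : ℤ) ∈ R 2 0 := fun h => by
    obtain ⟨m', hm', he'⟩ := (memR20 _).mp h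
    have := wa_wb hm'
    exact notAB ⟨wa m' + m', by have := wa_pos hm'; omega, by omega⟩ hn
  have h11 : ¬ ((3 * wa m + 2 * m : ℕ) : ℤ) ∈ R 1 1 := fun h =>
    not_B_B1 hn ((memR11 _).mp h)
  have h21 : ¬ ((3 * wa m + 2 * m : ℕ) : ℤ) ∈ R 2 1 := fun h =>
    not_BA_BB ((memR21 _).mp h) hbb
  have key := inv_wb hb
  unfold jinv
  rw [if_neg (by rintro (h | h); exacts [h20 h, h11 h]), if_neg h21]
  rw [show 3 * wa m + 2 * m = wa (wa m + m) + (wa m + m) by omega, key]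
  omega

lemma left_inv {n : ℕ} (hn : 0 < n) : jinv (jmap n) = n := by
  rcases cases3 hn with ⟨m, hm, he⟩ | ⟨m, hm, he⟩ | ⟨m, hm, he⟩
  · rw [← he, jmap_B hm, jinv_BA hm, he]
  · have ha := wa_pos hm
    rw [show n = wa m + m - 1 by omega, jmap_B1 hm]
    have := jinv_A hm
    omega
  · rw [← he, jmap_AB hm, jinv_BB hm]

lemma right_inv {n : ℕ} (hn : 0 < n) : jmap (jinv n) = n := by
  rcases AorB hn with ⟨k, hk, he⟩ | h
  · have h1 := jinv_A hk
    have ha := wa_pos hk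
    rw [← he, show jinv (wa k) = wa k + k - 1 by omega, jmap_B1 hk]
  · rcases casesB h with ⟨m, hm, he⟩ | ⟨m, hm, he⟩
    · have ha := wa_pos hm
      rw [show n = 2 * wa m + m - 1 by omega, jinv_BA hm, jmap_B hm]
    · rw [← he, jinv_BB hm, jmap_AB hm]

lemma jmap_pos {n : ℕ} (hn : 0 < n) : 0 < jmap n := by
  rcases cases3 hn with ⟨m, hm, he⟩ | ⟨m, hm, he⟩ | ⟨m, hm, he⟩
  · rw [← he, jmap_B hm]; have := wa_pos hm; omega
  · have ha := wa_pos hm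
    rw [show n = wa m + m - 1 by omega, jmap_B1 hm]; omega
  · rw [← he, jmap_AB hm]; have := wa_pos hm; omega

lemma jinv_pos {n : ℕ} (hn : 0 < n) : 0 < jinv n := by
  rcases AorB hn with ⟨k, hk, he⟩ | h
  · have h1 := jinv_A hk
    have := wa_pos hk
    rw [← he]; omega
  · rcases casesB h with ⟨m, hm, he⟩ | ⟨m, hm, he⟩
    · have ha := wa_pos hm
      rw [show n = 2 * wa m + m - 1 by omega, jinv_BA hm]; omega
    · rw [← he, jinv_BB hm]; have := wa_pos hm; omega

theorem stmt_11 :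
    Set.BijOn jmap {n : ℕ | 0 < n} {n : ℕ | 0 < n} ∧
    (∀ n : ℕ, 0 < n → jinv (jmap n) = n) ∧
    (∀ n : ℕ, 0 < n → jmap (jinv n) = n) := by
  refine ⟨⟨fun n hn => jmap_pos hn, ?_, ?_⟩, fun n hn => left_inv hn, fun n hn => right_inv hn⟩
  · intro a ha b hb hab
    rw [← left_inv ha, ← left_inv hb, hab]
  · intro n hn
    exact ⟨jinv n, jinv_pos hn, right_inv hn⟩
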